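/- Let p be a monic polynomial of degree N ≥ 1 over a field K. Then the polynomial ring K[z] is a free module over the subring K[p(z)] with basis 1, z, ..., z^{N-1}. -/

import Mathlib

open Polynomial

/-- For a field `K` and `p ∈ K[z]` monic of degree `N ≥ 1`, the polynomial ring `K[z]`
is a free module over the subring `K[p(z)]` (the image of `K[X]` under `X ↦ p(z)`),
with basis `1, z, …, z^{N-1}`. -/
theorem free_over_subring_of_p (K : Type*) [Field K] (N : ℕ) (hN : 1 ≤ N)
    (p : K[X]) (hmonic : p.Monic) (hdeg : p.natDegree = N) :
    ∃ b : Module.Basis (Fin N) ((aeval p : K[X] →ₐ[K] K[X]).range) K[X],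
      ∀ k : Fin N, b k = X ^ (k : ℕ) := by
  set R := (aeval p : K[X] →ₐ[K] K[X]).range with hR
  have hpne : p ≠ 0 := hmonic.ne_zero
  set M : Submodule R K[X] :=
    Submodule.span R (Set.range fun k : Fin N => (X : K[X]) ^ (k : ℕ)) with hM
  have hmul : ∀ r : K[X], r ∈ R → ∀ x ∈ M, r * x ∈ M := by
    intro r hr x hx
    exact M.smul_mem (⟨r, hr⟩ : R) hx
  -- low degree polynomials are in the span
  have hlow : ∀ f : K[X], f.natDegree < N → f ∈ M := by
    intro f hf
    rw [Polynomial.as_sum_range' f N hf]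
    refine Submodule.sum_mem _ ?_
    intro i hi
    rw [← Polynomial.C_mul_X_pow_eq_monomial]
    refine hmul _ ⟨C (f.coeff i), by simp⟩ _ ?_
    exact Submodule.subset_span ⟨⟨i, Finset.mem_range.mp hi⟩, rfl⟩
  have hspan : ∀ (n : ℕ) (f : K[X]), f.natDegree ≤ n → f ∈ M := by
    intro n
    induction n with
    | zero => intro f hf; exact hlow f (lt_of_le_of_lt hf hN)
    | succ n ih =>
      intro f hf
      by_cases hfN : f.natDegree < N
      · exact hlow f hfN
      · rw [← Polynomial.modByMonic_add_div f p]
        refine Submodule.add_mem _ ?_ (hmul p ⟨X, by simp⟩ _ (ih _ ?_))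
        · rcases eq_or_ne (f %ₘ p) 0 with h | h
          · rw [h]; exact hlow 0 (by simpa using Nat.lt_of_lt_of_le Nat.zero_lt_one hN)
          · refine hlow _ ?_
            have := Polynomial.degree_modByMonic_lt f hmonic
            rw [Polynomial.degree_eq_natDegree hpne, hdeg] at this
            exact (Polynomial.natDegree_lt_iff_degree_lt h).mpr this
        · rw [Polynomial.natDegree_divByMonic f hmonic, hdeg]
          omega
  have hsp : ⊤ ≤ M := fun f _ => hspan f.natDegree f le_rfl
  -- linear independence
  have hli : LinearIndependent R (fun k : Fin N => (X : K[X]) ^ (k : ℕ)) := by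
    classical
    rw [Fintype.linearIndependent_iff]
    intro g hg i
    by_contra hgi
    set c : Fin N → K[X] := fun j => (g j : K[X]) with hc
    have hgc : ∀ j, c j ≠ 0 → g j ≠ 0 := fun j h h' => h (by rw [hc]; simp [h'])
    have hci : c i ≠ 0 := fun h => hgi (Subtype.ext h)
    have hdvd : ∀ j, N ∣ (c j).natDegree := by
      intro j
      obtain ⟨q, hq⟩ := (g j).2
      have : c j = q.comp p := by rw [hc]; simp [← hq, ← comp_eq_aeval]
      rw [this, Polynomial.natDegree_comp, hdeg]
      exact ⟨q.natDegree, (mul_comm _ _)⟩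
    set d : Fin N → ℕ := fun j => (c j).natDegree + (j : ℕ) with hd
    have hdinj : ∀ j j', c j ≠ 0 → c j' ≠ 0 → d j = d j' → j = j' := by
      intro j j' _ _ h
      obtain ⟨t, ht⟩ := hdvd j
      obtain ⟨t', ht'⟩ := hdvd j'
      have hj : (j : ℕ) < N := j.2
      have hj' : (j' : ℕ) < N := j'.2
      rw [hd] at h
      simp only [ht, ht'] at h
      have : (j : ℕ) = (j' : ℕ) := by
        have h1 : (N * t + j) % N = (N * t' + j') % N := by rw [h]
        rwa [Nat.mul_add_mod, Nat.mul_add_mod, Nat.mod_eq_of_lt hj, Nat.mod_eq_of_lt hj'] at h1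
      exact Fin.ext this
    set S : Finset (Fin N) := Finset.univ.filter (fun j => c j ≠ 0) with hS
    have hiS : i ∈ S := by simp [hS, hci]
    obtain ⟨i₀, hi₀S, hmax⟩ := S.exists_max_image d ⟨i, hiS⟩
    have hci₀ : c i₀ ≠ 0 := by simpa [hS] using hi₀S
    have hsum : ∑ j, c j * X ^ (j : ℕ) = 0 := by
      rw [← hg]; rfl
    have hcoeff := congrArg (fun q : K[X] => q.coeff (d i₀)) hsum
    simp only [Polynomial.finset_sum_coeff, Polynomial.coeff_zero] at hcoeff
    rw [Finset.sum_eq_single i₀] at hcoeff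
    · have : (c i₀ * X ^ (i₀ : ℕ)).coeff (d i₀) = (c i₀).leadingCoeff := by
        rw [hd]
        exact Polynomial.coeff_mul_X_pow _ _ _
      rw [this] at hcoeff
      exact hci₀ (Polynomial.leadingCoeff_eq_zero.mp hcoeff)
    · intro j _ hj
      rcases eq_or_ne (c j) 0 with h | h
      · simp [h]
      · have hjS : j ∈ S := by simp [hS, h]
        have hle : d j ≤ d i₀ := hmax j hjS
        have hne : d j ≠ d i₀ := fun he => hj (hdinj j i₀ h hci₀ he)
        refine Polynomial.coeff_eq_zero_of_natDegree_lt ?_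
        calc (c j * X ^ (j : ℕ)).natDegree ≤ (c j).natDegree + (j : ℕ) :=
              le_trans (Polynomial.natDegree_mul_le) (by simp)
          _ < d i₀ := lt_of_le_of_ne hle hne
    · intro h; exact absurd (Finset.mem_univ i₀) h
  exact ⟨Module.Basis.mk hli hsp, fun k => Module.Basis.mk_apply hli hsp k⟩
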